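/- The generalized symmetric strategy improvement algorithm considers at least all improving moves considered by symmetric strategy improvement: for any pair of admissible strategies (σ,τ), (I_σ ∩ {(v,\bar{τ}(v))}) ⊆ I_σ ∩ J_σ(τ) and (I_τ ∩ {(v,\bar{σ}(v))}) ⊆ I_τ ∩ J_τ(σ). -/

import Mathlib

structure PGame (V : Type) where
  E : V → V → Prop
  isP0 : V → Bool
  p : V → ℤ

namespace PGame

variable {V : Type}

/-- A valid positional strategy for player 0: at every player-0 node it follows an edge. -/
def Strat0Valid (G : PGame V) (σ : V → V) : Prop := ∀ v, G.isP0 v = true → G.E v (σ v)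

/-- A valid positional strategy for player 1. -/
def Strat1Valid (G : PGame V) (τ : V → V) : Prop := ∀ v, G.isP0 v = false → G.E v (τ v)

/-- Edges of the subgraph where player 0 follows `σ` (player 1 keeps all edges). -/
def E0 (G : PGame V) (σ : V → V) (v w : V) : Prop :=
  if G.isP0 v then w = σ v else G.E v w

/-- Edges of the subgraph where player 1 follows `τ` (player 0 keeps all edges). -/
def E1 (G : PGame V) (τ : V → V) (v w : V) : Prop :=
  if G.isP0 v then G.E v w else w = τ v

/-- A cycle of length `k` (given by a `k`-periodic sequence) in the relation `R`. -/
def IsCycle (R : V → V → Prop) (k : ℕ) (c : ℕ → V) : Prop :=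
  0 < k ∧ (∀ i, R (c i) (c (i + 1))) ∧ ∀ i, c (i + k) = c i

/-- The highest priority occurring on the (periodic) cycle `c` is even. -/
def TopEven (G : PGame V) (c : ℕ → V) : Prop :=
  ∃ i, Even (G.p (c i)) ∧ ∀ j, G.p (c j) ≤ G.p (c i)

/-- The highest priority occurring on the (periodic) cycle `c` is odd. -/
def TopOdd (G : PGame V) (c : ℕ → V) : Prop :=
  ∃ i, Odd (G.p (c i)) ∧ ∀ j, G.p (c j) ≤ G.p (c i)

/-- `σ` is an admissible player 0 strategy: valid, and every cycle avoiding the sink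
in the subgraph where player 0 follows `σ` has even highest priority. -/
def Admissible0 (G : PGame V) (top : V) (σ : V → V) : Prop :=
  G.Strat0Valid σ ∧ ∀ k c, IsCycle (G.E0 σ) k c → (∀ i, c i ≠ top) → G.TopEven c

/-- `τ` is an admissible player 1 strategy. -/
def Admissible1 (G : PGame V) (top : V) (τ : V → V) : Prop :=
  G.Strat1Valid τ ∧ ∀ k c, IsCycle (G.E1 τ) k c → (∀ i, c i ≠ top) → G.TopOdd c

/-- `top` is a sink node: unique smallest priority and only the self-loop as outgoing edge. -/
def IsSink (G : PGame V) (top : V) : Prop :=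
  (∀ v, v ≠ top → G.p top < G.p v) ∧ (∀ w, G.E top w ↔ w = top)

/-- A sink parity game. -/
def IsSinkGame (G : PGame V) (top : V) : Prop :=
  G.IsSink top ∧ (∃ σ, G.Admissible0 top σ) ∧ (∃ τ, G.Admissible1 top τ)

/-- One move when both players play their positional strategies. -/
def step (G : PGame V) (σ τ : V → V) (v : V) : V := if G.isP0 v then σ v else τ v

/-- The play from `v` under the strategies `σ`, `τ`. -/
def play (G : PGame V) (σ τ : V → V) (v : V) (n : ℕ) : V := (G.step σ τ)^[n] v

end PGame
/-- Play values: `-∞`, a nonnegative integer vector indexed by priorities, or `∞`. -/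
inductive EV : Type where
  | neg : EV
  | fin : (ℤ → ℕ) → EV
  | pos : EV

/-- The strict comparison `B ◁ C` on vectors: at the largest priority `q` where they differ,
either `q` is even and `B q < C q`, or `q` is odd and `B q > C q`. -/
def vlt (B C : ℤ → ℕ) : Prop :=
  ∃ q : ℤ, B q ≠ C q ∧ (∀ r : ℤ, q < r → B r = C r) ∧
    ((Even q ∧ B q < C q) ∨ (Odd q ∧ C q < B q))

/-- The strict order `◁` extended with `-∞` as least and `∞` as greatest element. -/
def elt : EV → EV → Prop
  | EV.neg, EV.neg => False
  | EV.neg, _ => True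
  | EV.fin B, EV.fin C => vlt B C
  | EV.fin _, EV.pos => True
  | _, _ => False

/-- The non-strict order `⊴`. -/
def ele (x y : EV) : Prop := elt x y ∨ x = y

/-- Priority `q` is seen infinitely often along the play from `v`. -/
def InfOft {V : Type} (G : PGame V) (σ τ : V → V) (v : V) (q : ℤ) : Prop :=
  ∀ n, ∃ m, n ≤ m ∧ G.p (G.play σ τ v m) = q

open Classical in
/-- The play value `Θ_{σ,τ}(v)`: if the play reaches the sink `top`, the vector counting
for each priority how often it occurs before reaching `top`; otherwise `∞` or `-∞`
according to the parity of the highest priority seen infinitely often. -/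
noncomputable def theta {V : Type} (G : PGame V) (top : V) (σ τ : V → V) (v : V) : EV :=
  if h : ∃ n, G.play σ τ v n = top then
    EV.fin (fun q => ((Finset.range (Nat.find h)).filter
      (fun j => G.p (G.play σ τ v j) = q)).card)
  else if ∃ q, InfOft G σ τ v q ∧ Even q ∧ ∀ q', InfOft G σ τ v q' → q' ≤ q
    then EV.pos else EV.neg

/-- `τbar` is an optimal counterstrategy of player 1 against `σ`: it minimizes `Θ_{σ,·}`
pointwise with respect to `⊴`. The valuation is `Ξ_σ = Θ_{σ,τbar}`. -/
def OptCounter1 {V : Type} (G : PGame V) (top : V) (σ τbar : V → V) : Prop :=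
  G.Strat1Valid τbar ∧
    ∀ τ, G.Strat1Valid τ → ∀ v, ele (theta G top σ τbar v) (theta G top σ τ v)

/-- `σbar` is an optimal counterstrategy of player 0 against `τ`: it maximizes `Θ_{·,τ}`
pointwise with respect to `⊴`. The valuation is `Ξ_τ = Θ_{σbar,τ}`. -/
def OptCounter0 {V : Type} (G : PGame V) (top : V) (τ σbar : V → V) : Prop :=
  G.Strat0Valid σbar ∧
    ∀ σ, G.Strat0Valid σ → ∀ v, ele (theta G top σ τ v) (theta G top σbar τ v)

section Aux

open PGame Finset

variable {V : Type}

/-- Add a count vector to a play value. -/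
def addF (C : ℤ → ℕ) : EV → EV
  | EV.neg => EV.neg
  | EV.fin B => EV.fin (fun r => C r + B r)
  | EV.pos => EV.pos

lemma addF_addF (C C' : ℤ → ℕ) (x : EV) :
    addF C (addF C' x) = addF (fun r => C r + C' r) x := by
  cases x <;> simp [addF, add_assoc]

lemma addF_zero (C : ℤ → ℕ) (hC : ∀ r, C r = 0) (x : EV) : addF C x = x := by
  cases x <;> simp [addF, hC]

lemma vlt_add_iff (C B B' : ℤ → ℕ) :
    vlt (fun r => C r + B r) (fun r => C r + B' r) ↔ vlt B B' := by
  unfold vlt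
  constructor
  · rintro ⟨q, h1, h2, h3⟩
    have h1' : C q + B q ≠ C q + B' q := h1
    have h2' : ∀ r, q < r → C r + B r = C r + B' r := h2
    have h3' : (Even q ∧ C q + B q < C q + B' q) ∨ (Odd q ∧ C q + B' q < C q + B q) := h3
    refine ⟨q, by omega, fun r hr => by have := h2' r hr; omega, ?_⟩
    rcases h3' with ⟨he, hlt⟩ | ⟨ho, hlt⟩
    · exact Or.inl ⟨he, by omega⟩
    · exact Or.inr ⟨ho, by omega⟩
  · rintro ⟨q, h1, h2, h3⟩
    refine ⟨q, show C q + B q ≠ C q + B' q by omega,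
      fun r hr => show C r + B r = C r + B' r by have := h2 r hr; omega, ?_⟩
    rcases h3 with ⟨he, hlt⟩ | ⟨ho, hlt⟩
    · exact Or.inl ⟨he, show C q + B q < C q + B' q by omega⟩
    · exact Or.inr ⟨ho, show C q + B' q < C q + B q by omega⟩

lemma elt_addF_iff (C : ℤ → ℕ) (x y : EV) : elt (addF C x) (addF C y) ↔ elt x y := by
  cases x <;> cases y <;> simp [addF, elt, vlt_add_iff]

lemma addF_inj (C : ℤ → ℕ) {x y : EV} (h : addF C x = addF C y) : x = y := by
  cases x <;> cases y <;> simp [addF] at h ⊢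
  funext r
  have hr : C r + _ = C r + _ := congrFun h r
  omega

lemma ele_addF_iff (C : ℤ → ℕ) (x y : EV) : ele (addF C x) (addF C y) ↔ ele x y := by
  unfold ele
  rw [elt_addF_iff]
  constructor
  · rintro (h | h)
    · exact Or.inl h
    · exact Or.inr (addF_inj C h)
  · rintro (h | h)
    · exact Or.inl h
    · exact Or.inr (by rw [h])

lemma ele_refl (x : EV) : ele x x := Or.inr rfl

lemma play_succ (G : PGame V) (σ τ : V → V) (v : V) (n : ℕ) :
    G.play σ τ v (n + 1) = G.play σ τ (G.step σ τ v) n := by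
  simp [PGame.play, Function.iterate_succ_apply]

lemma play_zero (G : PGame V) (σ τ : V → V) (v : V) : G.play σ τ v 0 = v := rfl

lemma play_add (G : PGame V) (σ τ : V → V) (v : V) (a b : ℕ) :
    G.play σ τ v (a + b) = G.play σ τ (G.play σ τ v b) a := by
  simp [PGame.play, Function.iterate_add_apply]

lemma count_succ' (P : ℕ → Prop) [DecidablePred P] (n : ℕ) :
    ((Finset.range (n + 1)).filter P).card =
      (if P 0 then 1 else 0) + ((Finset.range n).filter (fun j => P (j + 1))).card := by
  rw [Finset.card_filter, Finset.card_filter, Finset.sum_range_succ', add_comm]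

lemma theta_step (G : PGame V) (top : V) (σ τ : V → V) (v : V) (hv : v ≠ top) :
    theta G top σ τ v =
      addF (fun r => if G.p v = r then 1 else 0) (theta G top σ τ (G.step σ τ v)) := by
  classical
  set u := G.step σ τ v with hu
  have hp : ∀ n, G.play σ τ v (n + 1) = G.play σ τ u n := fun n => play_succ G σ τ v n
  by_cases h : ∃ n, G.play σ τ v n = top
  · have h' : ∃ n, G.play σ τ u n = top := by
      obtain ⟨n, hn⟩ := h
      cases n with
      | zero => exact absurd hn hv
      | succ k => exact ⟨k, by rw [← hp]; exact hn⟩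
    have hN : Nat.find h = Nat.find h' + 1 := by
      have h1 : Nat.find h ≤ Nat.find h' + 1 := Nat.find_le (by rw [hp]; exact Nat.find_spec h')
      have h0 : Nat.find h ≠ 0 := by
        intro h0
        have hs := Nat.find_spec h
        rw [h0] at hs
        exact hv hs
      have h2 : Nat.find h' ≤ Nat.find h - 1 := Nat.find_le (by
        have hh : Nat.find h - 1 + 1 = Nat.find h := by omega
        rw [← hp, hh]; exact Nat.find_spec h)
      omega
    rw [theta, theta, dif_pos h, dif_pos h']
    simp only [addF]
    congr 1
    funext q
    rw [hN, count_succ']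
    have hpl0 : G.play σ τ v 0 = v := rfl
    simp only [hp, hpl0]
  · have h' : ¬∃ n, G.play σ τ u n = top := by
      rintro ⟨n, hn⟩
      exact h ⟨n + 1, by rw [hp]; exact hn⟩
    have hio : ∀ q, InfOft G σ τ v q ↔ InfOft G σ τ u q := by
      intro q
      constructor
      · intro hi n
        obtain ⟨m, hm1, hm2⟩ := hi (n + 1)
        obtain ⟨k, rfl⟩ : ∃ k, m = k + 1 := ⟨m - 1, by omega⟩
        exact ⟨k, by omega, by rw [← hp]; exact hm2⟩
      · intro hi n
        obtain ⟨m, hm1, hm2⟩ := hi n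
        exact ⟨m + 1, by omega, by rw [hp]; exact hm2⟩
    rw [theta, theta, dif_neg h, dif_neg h']
    simp only [hio]
    by_cases hc : ∃ q, InfOft G σ τ u q ∧ Even q ∧ ∀ q', InfOft G σ τ u q' → q' ≤ q
    · rw [if_pos hc]; rfl
    · rw [if_neg hc]; rfl

lemma theta_prefix (G : PGame V) (top : V) (σ τ : V → V) (m : ℕ) :
    ∀ w : V, (∀ j, j < m → G.play σ τ w j ≠ top) →
      theta G top σ τ w =
        addF (fun r => ((Finset.range m).filter (fun j => G.p (G.play σ τ w j) = r)).card)
          (theta G top σ τ (G.play σ τ w m)) := by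
  classical
  induction m with
  | zero =>
    intro w _
    rw [play_zero, addF_zero _ (fun r => by simp)]
  | succ k ih =>
    intro w hw
    have hw0 : w ≠ top := hw 0 (Nat.succ_pos k)
    have hstep : ∀ j, j < k → G.play σ τ (G.step σ τ w) j ≠ top := by
      intro j hj
      rw [← play_succ]
      exact hw (j + 1) (by omega)
    rw [theta_step G top σ τ w hw0, ih (G.step σ τ w) hstep, addF_addF, ← play_succ]
    congr 1
    funext r
    rw [count_succ' (fun j => G.p (G.play σ τ w j) = r) k]
    simp only [play_succ, play_zero]
    congr

open Classical in
/-- `theta` as a function of the play. -/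
noncomputable def thetaFun (G : PGame V) (top : V) (f : ℕ → V) : EV :=
  if h : ∃ n, f n = top then
    EV.fin (fun q => ((Finset.range (Nat.find h)).filter (fun j => G.p (f j) = q)).card)
  else if ∃ q, (∀ n, ∃ m, n ≤ m ∧ G.p (f m) = q) ∧ Even q ∧
      ∀ q', (∀ n, ∃ m, n ≤ m ∧ G.p (f m) = q') → q' ≤ q
    then EV.pos else EV.neg

lemma theta_eq_thetaFun (G : PGame V) (top : V) (σ τ : V → V) (v : V) :
    theta G top σ τ v = thetaFun G top (G.play σ τ v) := rfl

lemma theta_congr (G : PGame V) (top : V) {σ τ σ' τ' : V → V} {x : V}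
    (h : G.play σ τ x = G.play σ' τ' x) :
    theta G top σ τ x = theta G top σ' τ' x := by
  rw [theta_eq_thetaFun, theta_eq_thetaFun, h]

lemma play_top (G : PGame V) (top : V) (hsink : G.IsSink top) {σ τ : V → V}
    (hσ : G.Strat0Valid σ) (hτ : G.Strat1Valid τ) (n : ℕ) : G.play σ τ top n = top := by
  have hstep : G.step σ τ top = top := by
    unfold PGame.step
    by_cases h : G.isP0 top = true
    · rw [if_pos h]; exact (hsink.2 _).1 (hσ _ h)
    · rw [if_neg (by simp_all)]
      exact (hsink.2 _).1 (hτ _ (by simp_all))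
  induction n with
  | zero => rfl
  | succ k ih =>
    have : G.play σ τ top (k + 1) = G.step σ τ (G.play σ τ top k) := by
      simp [PGame.play, Function.iterate_succ_apply']
    rw [this, ih, hstep]

lemma play_periodic (G : PGame V) (σ τ : V → V) {v : V} {m : ℕ}
    (h : G.play σ τ v (m + 1) = v) : ∀ k n, G.play σ τ v (n + (m + 1) * k) = G.play σ τ v n := by
  intro k
  induction k with
  | zero => simp
  | succ t ih =>
    intro n
    have he : n + (m + 1) * (t + 1) = (n + (m + 1) * t) + (m + 1) := by ring
    rw [he, play_add, h, ih]

lemma play_mod (G : PGame V) (σ τ : V → V) {v : V} {m : ℕ}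
    (h : G.play σ τ v (m + 1) = v) (n : ℕ) :
    G.play σ τ v n = G.play σ τ v (n % (m + 1)) := by
  conv_lhs => rw [← Nat.mod_add_div n (m + 1)]
  exact play_periodic G σ τ h _ _

lemma step_p0 (G : PGame V) {v : V} (hv : G.isP0 v = true) (σ τ : V → V) :
    G.step σ τ v = σ v := by simp [PGame.step, hv]

lemma step_p1 (G : PGame V) {v : V} (hv : G.isP0 v = false) (σ τ : V → V) :
    G.step σ τ v = τ v := by simp [PGame.step, hv]

/-- All moves of an optimal player-0 counterstrategy dominate all other moves. -/
lemma key0 [Fintype V] (G : PGame V) (top : V) (hsink : G.IsSink top) {τ ρ : V → V}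
    (hτv : G.Strat1Valid τ) (hopt : OptCounter0 G top τ ρ) {v w : V}
    (hv : G.isP0 v = true) (hE : G.E v w) :
    ele (theta G top ρ τ w) (theta G top ρ τ (ρ v)) := by
  classical
  by_cases hvt : v = top
  · have hρv : G.E top (ρ v) := by rw [← hvt]; exact hopt.1 _ hv
    have hEw : G.E top w := by rw [← hvt]; exact hE
    rw [(hsink.2 w).1 hEw, (hsink.2 _).1 hρv]
    exact ele_refl _
  have hXiv : theta G top ρ τ v =
      addF (fun r => if G.p v = r then 1 else 0) (theta G top ρ τ (ρ v)) := by
    rw [theta_step G top ρ τ v hvt, step_p0 G hv]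
  set σ' := Function.update ρ v w with hσ'def
  have hσ'v : σ' v = w := Function.update_self v w ρ
  have hσ'ne : ∀ x, x ≠ v → σ' x = ρ x := fun x hx => Function.update_of_ne hx w ρ
  have hσ'valid : G.Strat0Valid σ' := by
    intro x hx
    by_cases hxv : x = v
    · subst hxv; rw [hσ'v]; exact hE
    · rw [hσ'ne x hxv]; exact hopt.1 x hx
  have hstepne : ∀ x, x ≠ v → G.step σ' τ x = G.step ρ τ x := by
    intro x hx
    unfold PGame.step
    by_cases hp0 : G.isP0 x <;> simp [hp0, hσ'ne x hx]
  by_cases hhit : ∃ n, G.play ρ τ w n = v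
  · -- play from w reaches v
    set m := Nat.find hhit with hm
    have hmspec : G.play ρ τ w m = v := Nat.find_spec hhit
    have hmmin : ∀ j, j < m → G.play ρ τ w j ≠ v := fun j hj => Nat.find_min hhit hj
    have hnotop : ∀ j, j ≤ m → G.play ρ τ w j ≠ top := by
      intro j hj hc
      refine hvt ?_
      rw [← hmspec, show m = (m - j) + j by omega, play_add, hc,
        play_top G top hsink hopt.1 hτv]
    set C : ℤ → ℕ :=
      fun r => ((Finset.range m).filter (fun j => G.p (G.play ρ τ w j) = r)).card with hC
    set D : ℤ → ℕ := fun r => (if G.p v = r then 1 else 0) + C r with hD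
    have hXw : theta G top ρ τ w = addF D (theta G top ρ τ (ρ v)) := by
      rw [theta_prefix G top ρ τ m w (fun j hj => hnotop j (le_of_lt hj)), hmspec, hXiv,
        addF_addF]
      congr 1
      funext r
      simp [hD, hC]
      omega
    rcases hXu : theta G top ρ τ (ρ v) with _ | B0 | _
    · rw [hXw, hXu]; exact ele_refl _
    · -- the interesting case
      rw [hXw, hXu]
      have hDv : D (G.p v) ≠ 0 := by simp [hD]
      have hDsupp : ∀ r, D r ≠ 0 → r ∈ Finset.image G.p Finset.univ := by
        intro r hr
        by_cases hpv : G.p v = r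
        · exact Finset.mem_image.2 ⟨v, Finset.mem_univ v, hpv⟩
        · have hCr : C r ≠ 0 := by simp [hD, hpv] at hr; exact hr
          obtain ⟨j, hj⟩ := Finset.card_ne_zero.1 hCr
          exact Finset.mem_image.2 ⟨_, Finset.mem_univ _, (Finset.mem_filter.1 hj).2⟩
      set s := (Finset.image G.p Finset.univ).filter (fun r => D r ≠ 0) with hs
      have hsne : s.Nonempty := ⟨G.p v, Finset.mem_filter.2 ⟨hDsupp _ hDv, hDv⟩⟩
      set q := s.max' hsne with hq
      have hqD : D q ≠ 0 := (Finset.mem_filter.1 (s.max'_mem hsne)).2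
      have hqmax : ∀ r, D r ≠ 0 → r ≤ q :=
        fun r hr => s.le_max' r (Finset.mem_filter.2 ⟨hDsupp r hr, hr⟩)
      rcases Int.even_or_odd q with heq | hoq
      · -- even top cycle priority: contradiction with optimality
        exfalso
        -- the σ' play from v is periodic
        have hag : ∀ j, j ≤ m → G.play σ' τ w j = G.play ρ τ w j := by
          intro j hj
          induction j with
          | zero => rfl
          | succ k ih =>
            rw [show k + 1 = 1 + k by omega, play_add, play_add, ih (by omega),
              show G.play σ' τ (G.play ρ τ w k) 1 = G.step σ' τ (G.play ρ τ w k) from rfl,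
              show G.play ρ τ (G.play ρ τ w k) 1 = G.step ρ τ (G.play ρ τ w k) from rfl,
              hstepne _ (hmmin k (by omega))]
        have hplay1 : ∀ j, G.play σ' τ v (j + 1) = G.play σ' τ w j := by
          intro j
          rw [show j + 1 = j + (0 + 1) by omega, play_add, play_succ, play_zero,
            step_p0 G hv, hσ'v]
        have hret : G.play σ' τ v (m + 1) = v := by
          rw [hplay1, hag m le_rfl, hmspec]
        have hcyc : ∀ j, j ≤ m → G.play σ' τ v j ≠ top := by
          intro j hj
          cases j with
          | zero => exact hvt
          | succ k =>
            rw [hplay1, hag k (by omega)]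
            exact hnotop k (by omega)
        have hnotop' : ∀ n, G.play σ' τ v n ≠ top := by
          intro n
          rw [play_mod G σ' τ hret n]
          have hlt := Nat.mod_lt n (show 0 < m + 1 by omega)
          exact hcyc _ (by omega)
        have hprio : ∃ j, j ≤ m ∧ G.p (G.play σ' τ v j) = q := by
          by_cases hpv : G.p v = q
          · exact ⟨0, by omega, by rw [play_zero]; exact hpv⟩
          · have hCq : C q ≠ 0 := by simp [hD, hpv] at hqD; exact hqD
            obtain ⟨j, hj⟩ := Finset.card_ne_zero.1 hCq
            obtain ⟨hj1, hj2⟩ := Finset.mem_filter.1 hj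
            have hjm : j < m := Finset.mem_range.1 hj1
            exact ⟨j + 1, by omega, by rw [hplay1, hag j (by omega)]; exact hj2⟩
        have hInf : InfOft G σ' τ v q := by
          intro n
          obtain ⟨j, hjm, hjq⟩ := hprio
          refine ⟨j + (m + 1) * n, by nlinarith, ?_⟩
          rw [play_periodic G σ' τ hret n j, hjq]
        have hInfmax : ∀ q', InfOft G σ' τ v q' → q' ≤ q := by
          intro q' h'
          obtain ⟨n, _, hn⟩ := h' 0
          rw [play_mod G σ' τ hret n] at hn
          refine hqmax q' ?_
          rcases Nat.lt_or_ge (n % (m + 1)) 1 with hi | hi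
          · have h0 : n % (m + 1) = 0 := by omega
            rw [h0, play_zero] at hn
            simp [hD, hn]
          · have him : n % (m + 1) ≤ m := by
              have := Nat.mod_lt n (show 0 < m + 1 by omega); omega
            obtain ⟨k, hk⟩ : ∃ k, n % (m + 1) = k + 1 := ⟨n % (m + 1) - 1, by omega⟩
            rw [hk, hplay1, hag k (by omega)] at hn
            have hCq' : C q' ≠ 0 := by
              refine Finset.card_ne_zero.2 ⟨k, Finset.mem_filter.2
                ⟨Finset.mem_range.2 (by omega), hn⟩⟩
            simp [hD]
            omega
        have hpos : theta G top σ' τ v = EV.pos := by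
          rw [theta, dif_neg (fun hc => by obtain ⟨n, hn⟩ := hc; exact hnotop' n hn),
            if_pos ⟨q, hInf, heq, hInfmax⟩]
        have hcontra := hopt.2 σ' hσ'valid v
        rw [hpos, hXiv, hXu] at hcontra
        rcases hcontra with hc | hc
        · exact hc
        · exact EV.noConfusion hc
      · -- odd top cycle priority: the strict inequality holds
        refine Or.inl ?_
        show vlt _ _
        refine ⟨q, ?_, ?_, Or.inr ⟨hoq, ?_⟩⟩
        · show D q + B0 q ≠ B0 q; omega
        · intro r hr
          have hDr : D r = 0 := by
            by_contra hDr
            exact absurd (hqmax r hDr) (by omega)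
          show D r + B0 r = B0 r
          omega
        · show B0 q < D q + B0 q; omega
    · rw [hXw, hXu]; exact ele_refl _
  · -- play from w never reaches v
    have hagree : ∀ n, G.play σ' τ w n = G.play ρ τ w n := by
      intro n
      induction n with
      | zero => rfl
      | succ k ih =>
        rw [show k + 1 = 1 + k by omega, play_add, play_add, ih,
          show G.play σ' τ (G.play ρ τ w k) 1 = G.step σ' τ (G.play ρ τ w k) from rfl,
          show G.play ρ τ (G.play ρ τ w k) 1 = G.step ρ τ (G.play ρ τ w k) from rfl,
          hstepne _ (fun hc => hhit ⟨k, hc⟩)]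
    have hth : theta G top σ' τ w = theta G top ρ τ w :=
      theta_congr G top (funext hagree)
    have h1 := hopt.2 σ' hσ'valid v
    rw [theta_step G top σ' τ v hvt, step_p0 G hv, hσ'v, hth, hXiv] at h1
    exact (ele_addF_iff _ _ _).1 h1

/-- All moves of an optimal player-1 counterstrategy are dominated by all other moves. -/
lemma key1 [Fintype V] (G : PGame V) (top : V) (hsink : G.IsSink top) {σ ρ : V → V}
    (hσv : G.Strat0Valid σ) (hopt : OptCounter1 G top σ ρ) {v w : V}
    (hv : G.isP0 v = false) (hE : G.E v w) :
    ele (theta G top σ ρ (ρ v)) (theta G top σ ρ w) := by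
  classical
  by_cases hvt : v = top
  · have hρv : G.E top (ρ v) := by rw [← hvt]; exact hopt.1 _ hv
    have hEw : G.E top w := by rw [← hvt]; exact hE
    rw [(hsink.2 w).1 hEw, (hsink.2 _).1 hρv]
    exact ele_refl _
  have hXiv : theta G top σ ρ v =
      addF (fun r => if G.p v = r then 1 else 0) (theta G top σ ρ (ρ v)) := by
    rw [theta_step G top σ ρ v hvt, step_p1 G hv]
  set τ' := Function.update ρ v w with hτ'def
  have hτ'v : τ' v = w := Function.update_self v w ρ
  have hτ'ne : ∀ x, x ≠ v → τ' x = ρ x := fun x hx => Function.update_of_ne hx w ρ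
  have hτ'valid : G.Strat1Valid τ' := by
    intro x hx
    by_cases hxv : x = v
    · subst hxv; rw [hτ'v]; exact hE
    · rw [hτ'ne x hxv]; exact hopt.1 x hx
  have hstepne : ∀ x, x ≠ v → G.step σ τ' x = G.step σ ρ x := by
    intro x hx
    unfold PGame.step
    by_cases hp0 : G.isP0 x <;> simp [hp0, hτ'ne x hx]
  by_cases hhit : ∃ n, G.play σ ρ w n = v
  · -- play from w reaches v
    set m := Nat.find hhit with hm
    have hmspec : G.play σ ρ w m = v := Nat.find_spec hhit
    have hmmin : ∀ j, j < m → G.play σ ρ w j ≠ v := fun j hj => Nat.find_min hhit hj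
    have hnotop : ∀ j, j ≤ m → G.play σ ρ w j ≠ top := by
      intro j hj hc
      refine hvt ?_
      rw [← hmspec, show m = (m - j) + j by omega, play_add, hc,
        play_top G top hsink hσv hopt.1]
    set C : ℤ → ℕ :=
      fun r => ((Finset.range m).filter (fun j => G.p (G.play σ ρ w j) = r)).card with hC
    set D : ℤ → ℕ := fun r => (if G.p v = r then 1 else 0) + C r with hD
    have hXw : theta G top σ ρ w = addF D (theta G top σ ρ (ρ v)) := by
      rw [theta_prefix G top σ ρ m w (fun j hj => hnotop j (le_of_lt hj)), hmspec, hXiv,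
        addF_addF]
      congr 1
      funext r
      simp [hD, hC]
      omega
    rcases hXu : theta G top σ ρ (ρ v) with _ | B0 | _
    · rw [hXw, hXu]; exact ele_refl _
    · -- the interesting case
      rw [hXw, hXu]
      have hDv : D (G.p v) ≠ 0 := by simp [hD]
      have hDsupp : ∀ r, D r ≠ 0 → r ∈ Finset.image G.p Finset.univ := by
        intro r hr
        by_cases hpv : G.p v = r
        · exact Finset.mem_image.2 ⟨v, Finset.mem_univ v, hpv⟩
        · have hCr : C r ≠ 0 := by simp [hD, hpv] at hr; exact hr
          obtain ⟨j, hj⟩ := Finset.card_ne_zero.1 hCr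
          exact Finset.mem_image.2 ⟨_, Finset.mem_univ _, (Finset.mem_filter.1 hj).2⟩
      set s := (Finset.image G.p Finset.univ).filter (fun r => D r ≠ 0) with hs
      have hsne : s.Nonempty := ⟨G.p v, Finset.mem_filter.2 ⟨hDsupp _ hDv, hDv⟩⟩
      set q := s.max' hsne with hq
      have hqD : D q ≠ 0 := (Finset.mem_filter.1 (s.max'_mem hsne)).2
      have hqmax : ∀ r, D r ≠ 0 → r ≤ q :=
        fun r hr => s.le_max' r (Finset.mem_filter.2 ⟨hDsupp r hr, hr⟩)
      rcases Int.even_or_odd q with heq | hoq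
      · -- even top cycle priority: the strict inequality holds
        refine Or.inl ?_
        show vlt _ _
        refine ⟨q, ?_, ?_, Or.inl ⟨heq, ?_⟩⟩
        · show B0 q ≠ D q + B0 q; omega
        · intro r hr
          have hDr : D r = 0 := by
            by_contra hDr
            exact absurd (hqmax r hDr) (by omega)
          show B0 r = D r + B0 r
          omega
        · show B0 q < D q + B0 q; omega
      · -- odd top cycle priority: contradiction with optimality
        exfalso
        -- the τ' play from v is periodic
        have hag : ∀ j, j ≤ m → G.play σ τ' w j = G.play σ ρ w j := by
          intro j hj
          induction j with
          | zero => rfl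
          | succ k ih =>
            rw [show k + 1 = 1 + k by omega, play_add, play_add, ih (by omega),
              show G.play σ τ' (G.play σ ρ w k) 1 = G.step σ τ' (G.play σ ρ w k) from rfl,
              show G.play σ ρ (G.play σ ρ w k) 1 = G.step σ ρ (G.play σ ρ w k) from rfl,
              hstepne _ (hmmin k (by omega))]
        have hplay1 : ∀ j, G.play σ τ' v (j + 1) = G.play σ τ' w j := by
          intro j
          rw [show j + 1 = j + (0 + 1) by omega, play_add, play_succ, play_zero,
            step_p1 G hv, hτ'v]
        have hret : G.play σ τ' v (m + 1) = v := by
          rw [hplay1, hag m le_rfl, hmspec]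
        have hcyc : ∀ j, j ≤ m → G.play σ τ' v j ≠ top := by
          intro j hj
          cases j with
          | zero => exact hvt
          | succ k =>
            rw [hplay1, hag k (by omega)]
            exact hnotop k (by omega)
        have hnotop' : ∀ n, G.play σ τ' v n ≠ top := by
          intro n
          rw [play_mod G σ τ' hret n]
          have hlt := Nat.mod_lt n (show 0 < m + 1 by omega)
          exact hcyc _ (by omega)
        have hprio : ∃ j, j ≤ m ∧ G.p (G.play σ τ' v j) = q := by
          by_cases hpv : G.p v = q
          · exact ⟨0, by omega, by rw [play_zero]; exact hpv⟩
          · have hCq : C q ≠ 0 := by simp [hD, hpv] at hqD; exact hqD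
            obtain ⟨j, hj⟩ := Finset.card_ne_zero.1 hCq
            obtain ⟨hj1, hj2⟩ := Finset.mem_filter.1 hj
            have hjm : j < m := Finset.mem_range.1 hj1
            exact ⟨j + 1, by omega, by rw [hplay1, hag j (by omega)]; exact hj2⟩
        have hInf : InfOft G σ τ' v q := by
          intro n
          obtain ⟨j, hjm, hjq⟩ := hprio
          refine ⟨j + (m + 1) * n, by nlinarith, ?_⟩
          rw [play_periodic G σ τ' hret n j, hjq]
        have hInfmax : ∀ q', InfOft G σ τ' v q' → q' ≤ q := by
          intro q' h'
          obtain ⟨n, _, hn⟩ := h' 0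
          rw [play_mod G σ τ' hret n] at hn
          refine hqmax q' ?_
          rcases Nat.lt_or_ge (n % (m + 1)) 1 with hi | hi
          · have h0 : n % (m + 1) = 0 := by omega
            rw [h0, play_zero] at hn
            simp [hD, hn]
          · have him : n % (m + 1) ≤ m := by
              have := Nat.mod_lt n (show 0 < m + 1 by omega); omega
            obtain ⟨k, hk⟩ : ∃ k, n % (m + 1) = k + 1 := ⟨n % (m + 1) - 1, by omega⟩
            rw [hk, hplay1, hag k (by omega)] at hn
            have hCq' : C q' ≠ 0 := by
              refine Finset.card_ne_zero.2 ⟨k, Finset.mem_filter.2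
                ⟨Finset.mem_range.2 (by omega), hn⟩⟩
            simp [hD]
            omega
        have hneg : theta G top σ τ' v = EV.neg := by
          rw [theta, dif_neg (fun hc => by obtain ⟨n, hn⟩ := hc; exact hnotop' n hn),
            if_neg ?_]
          rintro ⟨q'', hI'', hev'', hmax''⟩
          have h1 : q ≤ q'' := hmax'' q hInf
          have h2 : q'' ≤ q := hInfmax q'' hI''
          have : q'' = q := le_antisymm h2 h1
          rw [this] at hev''
          exact (Int.not_odd_iff_even.2 hev'') hoq
        have hcontra := hopt.2 τ' hτ'valid v
        rw [hneg, hXiv, hXu] at hcontra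
        rcases hcontra with hc | hc
        · exact hc
        · exact EV.noConfusion hc
    · rw [hXw, hXu]; exact ele_refl _
  · -- play from w never reaches v
    have hagree : ∀ n, G.play σ τ' w n = G.play σ ρ w n := by
      intro n
      induction n with
      | zero => rfl
      | succ k ih =>
        rw [show k + 1 = 1 + k by omega, play_add, play_add, ih,
          show G.play σ τ' (G.play σ ρ w k) 1 = G.step σ τ' (G.play σ ρ w k) from rfl,
          show G.play σ ρ (G.play σ ρ w k) 1 = G.step σ ρ (G.play σ ρ w k) from rfl,
          hstepne _ (fun hc => hhit ⟨k, hc⟩)]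
    have hth : theta G top σ τ' w = theta G top σ ρ w :=
      theta_congr G top (funext hagree)
    have h1 := hopt.2 τ' hτ'valid v
    rw [theta_step G top σ τ' v hvt, step_p1 G hv, hτ'v, hth, hXiv] at h1
    exact (ele_addF_iff _ _ _).1 h1

end Aux

/-- Generalized symmetric strategy improvement considers at least all improving moves of
symmetric strategy improvement: `I_σ ∩ {(v, τ̄ v)} ⊆ I_σ ∩ J_σ(τ)` and
`I_τ ∩ {(v, σ̄ v)} ⊆ I_τ ∩ J_τ(σ)`. -/
theorem stmt8 {V : Type} [Fintype V] (G : PGame V) (top : V) (hsg : G.IsSinkGame top)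
    (σ τ σbar τbar : V → V)
    (hσ : G.Admissible0 top σ) (hτ : G.Admissible1 top τ)
    (hσbar : OptCounter1 G top σ σbar) (hτbar : OptCounter0 G top τ τbar) :
    (({e : V × V | G.isP0 e.1 = true ∧
        elt (theta G top σ σbar (σ e.1)) (theta G top σ σbar e.2)} ∩
      {e : V × V | G.isP0 e.1 = true ∧ e.2 = τbar e.1}) ⊆
     ({e : V × V | G.isP0 e.1 = true ∧
        elt (theta G top σ σbar (σ e.1)) (theta G top σ σbar e.2)} ∩
      {e : V × V | G.isP0 e.1 = true ∧
        ele (theta G top τbar τ (σ e.1)) (theta G top τbar τ e.2)})) ∧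
    (({e : V × V | G.isP0 e.1 = false ∧
        elt (theta G top τbar τ e.2) (theta G top τbar τ (τ e.1))} ∩
      {e : V × V | G.isP0 e.1 = false ∧ e.2 = σbar e.1}) ⊆
     ({e : V × V | G.isP0 e.1 = false ∧
        elt (theta G top τbar τ e.2) (theta G top τbar τ (τ e.1))} ∩
      {e : V × V | G.isP0 e.1 = false ∧
        ele (theta G top σ σbar e.2) (theta G top σ σbar (τ e.1))})) := by
  obtain ⟨hsink, -, -⟩ := hsg
  constructor
  · rintro ⟨a, b⟩ ⟨⟨h1, h2⟩, ⟨h3, h4⟩⟩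
    refine ⟨⟨h1, h2⟩, ⟨h1, ?_⟩⟩
    show ele (theta G top τbar τ (σ a)) (theta G top τbar τ b)
    rw [show b = τbar a from h4]
    exact key0 G top hsink hτ.1 hτbar h1 (hσ.1 a h1)
  · rintro ⟨a, b⟩ ⟨⟨h1, h2⟩, ⟨h3, h4⟩⟩
    refine ⟨⟨h1, h2⟩, ⟨h1, ?_⟩⟩
    show ele (theta G top σ σbar b) (theta G top σ σbar (τ a))
    rw [show b = σbar a from h4]
    exact key1 G top hsink hσ.1 hσbar h1 (hτ.1 a h1)
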